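/- Let p be a prime, k a field of characteristic p, q a power of p, and d_q : D → D the k-linear map d_q(x^[n]) = x^[n-q]. Then d_q is a derivation of D. -/

import Mathlib

lemma lucas_pow {p : ℕ} [Fact p.Prime] (r N K : ℕ) :
    ((N.choose K : ℕ) : ZMod p) =
      (((N % p ^ r).choose (K % p ^ r) : ℕ) : ZMod p) *
      (((N / p ^ r).choose (K / p ^ r) : ℕ) : ZMod p) := by
  induction r generalizing N K with
  | zero => simp [Nat.mod_one]
  | succ r ih =>
    have L : ∀ N' K' : ℕ, ((N'.choose K' : ℕ) : ZMod p) =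
        (((N' % p).choose (K' % p) : ℕ) : ZMod p) * (((N' / p).choose (K' / p) : ℕ) : ZMod p) := by
      intro N' K'
      have h := Choose.choose_modEq_choose_mod_mul_choose_div_nat (p := p) (n := N') (k := K')
      have := (ZMod.natCast_eq_natCast_iff _ _ _).mpr h
      push_cast at this
      exact this
    rw [L N K, ih (N / p) (K / p), L (N % p ^ (r + 1)) (K % p ^ (r + 1))]
    rw [Nat.mod_mod_of_dvd _ (dvd_pow_self p r.succ_ne_zero),
      Nat.mod_mod_of_dvd _ (dvd_pow_self p r.succ_ne_zero)]
    rw [show p ^ (r + 1) = p * p ^ r from pow_succ' p r]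
    simp only [Nat.mod_mul_right_div_self, Nat.div_div_eq_div_mul]
    ring

/-- The key coefficient identity in `k`. -/
lemma key_coeff (p : ℕ) (hp : p.Prime) (k : Type*) [Field k] [CharP k p]
    (r q : ℕ) (hq : q = p ^ r) (n m : ℕ) :
    (if n + m < q then (0 : k) else ((n + m).choose n : k)) =
      (if m < q then 0 else ((n + m - q).choose n : k)) +
      (if n < q then 0 else ((n + m - q).choose (n - q) : k)) := by
  haveI : Fact p.Prime := ⟨hp⟩
  have hq1 : 0 < q := hq ▸ pow_pos hp.pos r
  have lucask : ∀ N K : ℕ, ((N.choose K : ℕ) : k) =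
      (((N % q).choose (K % q) : ℕ) : k) * (((N / q).choose (K / q) : ℕ) : k) := by
    intro N K
    have h := lucas_pow (p := p) r N K
    have h2 := congrArg (ZMod.castHom (dvd_refl p) k) h
    rw [map_mul, map_natCast, map_natCast, map_natCast] at h2
    rwa [hq]
  have hmod : ∀ c u : ℕ, u < q → (c * q + u) % q = u := fun c u hu => by
    rw [mul_comm, Nat.mul_add_mod, Nat.mod_eq_of_lt hu]
  have hdiv : ∀ c u : ℕ, u < q → (c * q + u) / q = c := fun c u hu => by
    rw [mul_comm, Nat.mul_add_div hq1, Nat.div_eq_of_lt hu, add_zero]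
  obtain ⟨a, s, hs, rfl⟩ : ∃ a s, s < q ∧ n = a * q + s :=
    ⟨n / q, n % q, Nat.mod_lt _ hq1, by
      conv_lhs => rw [← Nat.div_add_mod n q]
      ring⟩
  obtain ⟨b, t, ht, rfl⟩ : ∃ b t, t < q ∧ m = b * q + t :=
    ⟨m / q, m % q, Nat.mod_lt _ hq1, by
      conv_lhs => rw [← Nat.div_add_mod m q]
      ring⟩
  have hnm : ∀ c : ℕ, 1 ≤ c → q ≤ c * q := fun c hc =>
    le_trans (by rw [one_mul]) (Nat.mul_le_mul_right q hc)
  by_cases hst : q ≤ s + t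
  · -- Case B: carry, everything is 0 mod p
    obtain ⟨u, hu⟩ : ∃ u, s + t = q + u := Nat.exists_eq_add_of_le hst
    have hu' : u < q := by omega
    have hus : u < s := by omega
    have eN : a * q + s + (b * q + t) = (a + b + 1) * q + u := by
      rw [show a * q + s + (b * q + t) = a * q + b * q + (s + t) from by ring, hu]; ring
    have eNq : a * q + s + (b * q + t) - q = (a + b) * q + u := by
      rw [eN, show (a + b + 1) * q + u = (a + b) * q + u + q from by ring, Nat.add_sub_cancel]
    have l0 : ¬ (a * q + s + (b * q + t) < q) := by
      rw [eN]; exact Nat.not_lt.mpr (le_trans (hnm _ (by omega)) (Nat.le_add_right _ _))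
    rw [if_neg l0]
    have z1 : (((a * q + s + (b * q + t)).choose (a * q + s) : ℕ) : k) = 0 := by
      rw [lucask, eN, hmod _ _ hu', hmod a s hs, Nat.choose_eq_zero_of_lt hus]
      simp
    rw [z1]
    have z2 : (if b * q + t < q then (0 : k) else
        ((a * q + s + (b * q + t) - q).choose (a * q + s) : k)) = 0 := by
      split_ifs with hm
      · rfl
      · rw [lucask, eNq, hmod _ _ hu', hmod a s hs, Nat.choose_eq_zero_of_lt hus]; simp
    have z3 : (if a * q + s < q then (0 : k) else
        ((a * q + s + (b * q + t) - q).choose (a * q + s - q) : k)) = 0 := by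
      split_ifs with hn
      · rfl
      · obtain ⟨a', rfl⟩ : ∃ a', a = a' + 1 := by
          rcases a with _ | a'
          · exfalso; apply hn; simpa using hs
          · exact ⟨a', rfl⟩
        have en : (a' + 1) * q + s - q = a' * q + s := by
          rw [show (a' + 1) * q + s = a' * q + s + q from by ring, Nat.add_sub_cancel]
        rw [en, lucask, eNq, hmod _ _ hu', hmod a' s hs, Nat.choose_eq_zero_of_lt hus]; simp
    rw [z2, z3, add_zero]
  · -- Case A: no carry
    push_neg at hst
    have eN : a * q + s + (b * q + t) = (a + b) * q + (s + t) := by ring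
    by_cases hab : a + b = 0
    · obtain rfl : a = 0 := by omega
      obtain rfl : b = 0 := by omega
      simp only [Nat.zero_mul, Nat.zero_add] at *
      rw [if_pos (by omega), if_pos (by omega), if_pos (by omega), add_zero]
    · obtain ⟨c, hc⟩ : ∃ c, a + b = c + 1 := ⟨a + b - 1, by omega⟩
      have l0 : ¬ (a * q + s + (b * q + t) < q) := by
        rw [eN, hc]; exact Nat.not_lt.mpr (le_trans (hnm _ (by omega)) (Nat.le_add_right _ _))
      have eNq : a * q + s + (b * q + t) - q = c * q + (s + t) := by
        rw [eN, hc, show (c + 1) * q + (s + t) = c * q + (s + t) + q from by ring,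
          Nat.add_sub_cancel]
      rw [if_neg l0]
      have lhs_eq : (((a * q + s + (b * q + t)).choose (a * q + s) : ℕ) : k) =
          ((s + t).choose s : k) * ((c + 1).choose a : k) := by
        rw [lucask, eN, hc, hmod _ _ hst, hmod a s hs, hdiv _ _ hst, hdiv a s hs]
      rw [lhs_eq]
      -- subcases on a, b
      rcases Nat.eq_zero_or_pos b with hb | hb
      · -- b = 0, so m = t < q, and a = c+1
        subst hb
        obtain rfl : a = c + 1 := by omega
        rw [if_pos (by simpa using ht), zero_add]
        rw [if_neg (by rw [Nat.not_lt]; exact le_trans (hnm _ (by omega)) (Nat.le_add_right _ _))]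
        have en : (c + 1) * q + s - q = c * q + s := by
          rw [show (c + 1) * q + s = c * q + s + q from by ring, Nat.add_sub_cancel]
        have t3 : (((c + 1) * q + s + (0 * q + t) - q).choose ((c + 1) * q + s - q) : k) =
            ((s + t).choose s : k) * ((c).choose c : k) := by
          rw [en, lucask, eNq, hmod _ _ hst, hmod c s hs, hdiv _ _ hst, hdiv c s hs]
        rw [t3, Nat.choose_self, Nat.choose_self]
      · have hbq : ¬ (b * q + t < q) := by
          rw [Nat.not_lt]; exact le_trans (hnm _ hb) (Nat.le_add_right _ _)
        rw [if_neg hbq]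
        have t1 : (((a * q + s + (b * q + t) - q).choose (a * q + s) : ℕ) : k) =
            ((s + t).choose s : k) * ((c).choose a : k) := by
          rw [lucask, eNq, hmod _ _ hst, hmod a s hs, hdiv _ _ hst, hdiv a s hs]
        rw [t1]
        rcases Nat.eq_zero_or_pos a with ha | ha
        · subst ha
          rw [if_pos (by simpa using hs), add_zero]
          obtain rfl : b = c + 1 := by omega
          rw [Nat.choose_zero_right, Nat.choose_zero_right]
        · obtain ⟨a', rfl⟩ : ∃ a', a = a' + 1 := ⟨a - 1, by omega⟩
          rw [if_neg (by rw [Nat.not_lt]; exact le_trans (hnm _ (by omega)) (Nat.le_add_right _ _))]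
          have en : (a' + 1) * q + s - q = a' * q + s := by
            rw [show (a' + 1) * q + s = a' * q + s + q from by ring, Nat.add_sub_cancel]
          have t2 : (((a' + 1) * q + s + (b * q + t) - q).choose ((a' + 1) * q + s - q) : k) =
              ((s + t).choose s : k) * ((c).choose a' : k) := by
            rw [en, lucask, eNq, hmod _ _ hst, hmod a' s hs, hdiv _ _ hst, hdiv a' s hs]
          rw [t2, Nat.choose_succ_succ]
          push_cast
          ring


theorem stmt8' (p : ℕ) (hp : p.Prime) (k D : Type*) [Field k] [CharP k p]
    [CommRing D] [Algebra k D]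
    (B : Module.Basis ℕ k D) (hone : B 0 = 1)
    (hmul : ∀ n m : ℕ, B n * B m = ((n + m).choose n : k) • B (n + m))
    (r : ℕ) (q : ℕ) (hq : q = p ^ r)
    (dq : D →ₗ[k] D)
    (hdq : ∀ n : ℕ, dq (B n) = if n < q then 0 else B (n - q))
    (key : ∀ n m : ℕ,
      (if n + m < q then (0 : k) else ((n + m).choose n : k)) =
        (if m < q then 0 else ((n + m - q).choose n : k)) +
        (if n < q then 0 else ((n + m - q).choose (n - q) : k))) :
    ∀ f g : D, dq (f * g) = f * dq g + dq f * g := by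
  have hq1 : 0 < q := hq ▸ pow_pos hp.pos r
  have main : ∀ n m : ℕ, dq (B n * B m) = B n * dq (B m) + dq (B n) * B m := by
    intro n m
    rw [hmul, map_smul, hdq, hdq, hdq]
    have hk := key n m
    by_cases h2 : m < q <;> by_cases h3 : n < q
    · rw [if_pos h2, if_pos h3, mul_zero, zero_mul, add_zero]
      by_cases h1 : n + m < q
      · rw [if_pos h1, smul_zero]
      · rw [if_neg h1]
        simp only [if_neg h1, if_pos h2, if_pos h3, add_zero, zero_add] at hk
        rw [hk, zero_smul]
    · have h1 : ¬ n + m < q := by omega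
      rw [if_pos h2, if_neg h3, if_neg h1, mul_zero, zero_add,
        hmul (n - q) m, show n - q + m = n + m - q from by omega]
      simp only [if_neg h1, if_pos h2, if_neg h3, zero_add] at hk
      rw [hk]
    · have h1 : ¬ n + m < q := by omega
      rw [if_neg h2, if_pos h3, if_neg h1, zero_mul, add_zero,
        hmul n (m - q), show n + (m - q) = n + m - q from by omega]
      simp only [if_neg h1, if_neg h2, if_pos h3, add_zero] at hk
      rw [hk]
    · have h1 : ¬ n + m < q := by omega
      rw [if_neg h2, if_neg h3, if_neg h1,
        hmul n (m - q), hmul (n - q) m,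
        show n + (m - q) = n + m - q from by omega,
        show n - q + m = n + m - q from by omega]
      simp only [if_neg h1, if_neg h2, if_neg h3] at hk
      rw [hk, add_smul]
  have step1 : ∀ (n : ℕ) (g : D), dq (B n * g) = B n * dq g + dq (B n) * g := by
    intro n
    have hmap : dq ∘ₗ LinearMap.mulLeft k (B n) =
        LinearMap.mulLeft k (B n) ∘ₗ dq + LinearMap.mulLeft k (dq (B n)) := by
      apply B.ext
      intro m
      simp only [LinearMap.comp_apply, LinearMap.add_apply, LinearMap.mulLeft_apply]
      exact main n m
    intro g
    simpa using LinearMap.congr_fun hmap g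
  intro f g
  have hmap2 : dq ∘ₗ LinearMap.mulRight k g =
      LinearMap.mulRight k (dq g) + LinearMap.mulRight k g ∘ₗ dq := by
    apply B.ext
    intro n
    simp only [LinearMap.comp_apply, LinearMap.add_apply, LinearMap.mulRight_apply]
    exact step1 n g
  simpa using LinearMap.congr_fun hmap2 f

/-- Let `k` be a field of characteristic `p`, `q = p^r`, and `d_q : D → D` the `k`-linear
map with `d_q (x^[n]) = x^[n-q]` (zero if `n < q`). Then `d_q` is a derivation of the
divided power algebra `D`. -/
theorem stmt8 (p : ℕ) (hp : p.Prime) (k D : Type*) [Field k] [CharP k p]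
    [CommRing D] [Algebra k D]
    (B : Module.Basis ℕ k D) (hone : B 0 = 1)
    (hmul : ∀ n m : ℕ, B n * B m = ((n + m).choose n : k) • B (n + m))
    (r : ℕ) (q : ℕ) (hq : q = p ^ r)
    (dq : D →ₗ[k] D)
    (hdq : ∀ n : ℕ, dq (B n) = if n < q then 0 else B (n - q)) :
    ∀ f g : D, dq (f * g) = f * dq g + dq f * g :=
  stmt8' p hp k D B hone hmul r q hq dq hdq (key_coeff p hp k r q hq)
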